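/- For every integer k ≥ 1 there exists a string over a binary alphabet whose LZ3 parsing has size k and whose LZ parsing has size 2k − 1 (i.e., Zov3 = k and Zov = 2k − 1). In particular, for k ≥ 2 the string a a b a a b³ a a b⁷ ⋯ a a b^{2^{k−2}−1} a a b^{2^{k−2}} has LZ parsing a.a.b.aab.b².aab³.b⁴.⋯.aab^{2^{k−2}−1}.b of size 2k−1 and LZ3 parsing a.ab.aabb.baab⁴.b³aab⁸.⋯.b^{2^{k−3}−1}aab^{2^{k−2}} of size k. -/

import Mathlib

attribute [local instance] Classical.propDecidable

/-- `PermOv s i ℓ` : the substring of `s` of length `ℓ` starting at 0-indexed position `i`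
has an occurrence starting at some earlier position `j < i` (possibly overlapping it). -/
def PermOv {α : Type*} (s : List α) (i ℓ : ℕ) : Prop :=
  ∃ j < i, (s.drop j).take ℓ = (s.drop i).take ℓ

/-- `PermNov s i ℓ` : the substring of `s` of length `ℓ` starting at 0-indexed position `i`
has an occurrence starting at some position `j` with `j + ℓ ≤ i` (not overlapping it). -/
def PermNov {α : Type*} (s : List α) (i ℓ : ℕ) : Prop :=
  ∃ j, j + ℓ ≤ i ∧ (s.drop j).take ℓ = (s.drop i).take ℓ

/-- `PermOv3 s i ℓ` : the substring of `s` of length `ℓ - 1` starting at 0-indexed position `i`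
(i.e. the phrase of length `ℓ` starting at `i` minus its last letter) has an occurrence
starting at some earlier position `j < i` (possibly overlapping). -/
def PermOv3 {α : Type*} (s : List α) (i ℓ : ℕ) : Prop :=
  ∃ j < i, (s.drop j).take (ℓ - 1) = (s.drop i).take (ℓ - 1)

/-- `PermNov3 s i ℓ` : the substring of `s` of length `ℓ - 1` starting at 0-indexed position `i`
has an occurrence starting at some position `j` with `j + (ℓ - 1) ≤ i` (so this occurrence
ends before position `i`). -/
def PermNov3 {α : Type*} (s : List α) (i ℓ : ℕ) : Prop :=
  ∃ j, j + (ℓ - 1) ≤ i ∧ (s.drop j).take (ℓ - 1) = (s.drop i).take (ℓ - 1)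

/-- Length of the greedy phrase starting at 0-indexed position `i`: the largest
`ℓ ≤ |s| - i` permitted by `P`, or `1` (a single letter) if no length is permitted. -/
noncomputable def phraseLen {α : Type*} (P : List α → ℕ → ℕ → Prop) (s : List α) (i : ℕ) : ℕ :=
  max 1 (Nat.findGreatest (fun ℓ => P s i ℓ) (s.length - i))

/-- The list of phrases of the greedy parsing (w.r.t. the permission predicate `P`)
of the suffix of `s` starting at 0-indexed position `i`. -/
noncomputable def phrasesFrom {α : Type*} (P : List α → ℕ → ℕ → Prop) (s : List α) (i : ℕ) :
    List (List α) :=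
  if _h : i < s.length then
    (s.drop i).take (phraseLen P s i) :: phrasesFrom P s (i + phraseLen P s i)
  else []
  termination_by s.length - i
  decreasing_by
    have h1 : 1 ≤ phraseLen P s i := by unfold phraseLen; exact Nat.le_max_left _ _
    omega

/-- The LZ parsing of `s` (phrases may overlap their earlier occurrences). -/
noncomputable def lzPhrases {α : Type*} (s : List α) : List (List α) := phrasesFrom PermOv s 0
/-- The novLZ parsing of `s` (earlier occurrences may not overlap the phrases). -/
noncomputable def novlzPhrases {α : Type*} (s : List α) : List (List α) := phrasesFrom PermNov s 0
/-- The LZ3 parsing of `s`. -/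
noncomputable def lz3Phrases {α : Type*} (s : List α) : List (List α) := phrasesFrom PermOv3 s 0
/-- The novLZ3 parsing of `s`. -/
noncomputable def novlz3Phrases {α : Type*} (s : List α) : List (List α) := phrasesFrom PermNov3 s 0

/-- `Zov`: the size (number of phrases) of the LZ parsing of `s`. -/
noncomputable def zOv {α : Type*} (s : List α) : ℕ := (lzPhrases s).length
/-- `Znon`: the size of the novLZ parsing of `s`. -/
noncomputable def zNov {α : Type*} (s : List α) : ℕ := (novlzPhrases s).length
/-- `Zov₃`: the size of the LZ3 parsing of `s`. -/
noncomputable def zOv3 {α : Type*} (s : List α) : ℕ := (lz3Phrases s).length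
/-- `Znon₃`: the size of the novLZ3 parsing of `s`. -/
noncomputable def zNov3 {α : Type*} (s : List α) : ℕ := (novlz3Phrases s).length

/-- `ts` is an LZ-type parsing of `s`: a decomposition of `s` into nonempty strings such that
each `tᵢ` is a single letter or occurs in `s[1..|t₁⋯tᵢ|-1]`. -/
def IsLZTypeParsing {α : Type*} (s : List α) (ts : List (List α)) : Prop :=
  ts.flatten = s ∧ (∀ t ∈ ts, t ≠ []) ∧
    ∀ i (h : i < ts.length),
      ts[i].length = 1 ∨ ts[i] <:+: s.take ((ts.take (i + 1)).flatten.length - 1)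

/-- `ts` is a novLZ-type parsing of `s`: a decomposition of `s` into nonempty strings such that
each `tᵢ` is a single letter or occurs in `t₁⋯tᵢ₋₁`. -/
def IsNovLZTypeParsing {α : Type*} (s : List α) (ts : List (List α)) : Prop :=
  ts.flatten = s ∧ (∀ t ∈ ts, t ≠ []) ∧
    ∀ i (h : i < ts.length),
      ts[i].length = 1 ∨ ts[i] <:+: (ts.take i).flatten

/-- `ts` is an LZ3-type parsing of `s`: a decomposition of `s` into nonempty strings such that
each `tᵢ` minus its last letter occurs in `s[1..|t₁⋯tᵢ|-2]`. -/
def IsLZ3TypeParsing {α : Type*} (s : List α) (ts : List (List α)) : Prop :=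
  ts.flatten = s ∧ (∀ t ∈ ts, t ≠ []) ∧
    ∀ i (h : i < ts.length),
      ts[i].dropLast <:+: s.take ((ts.take (i + 1)).flatten.length - 2)

/-- `ts` is a novLZ3-type parsing of `s`: a decomposition of `s` into nonempty strings such that
each `tᵢ` minus its last letter occurs in `t₁⋯tᵢ₋₁`. -/
def IsNovLZ3TypeParsing {α : Type*} (s : List α) (ts : List (List α)) : Prop :=
  ts.flatten = s ∧ (∀ t ∈ ts, t ≠ []) ∧
    ∀ i (h : i < ts.length),
      ts[i].dropLast <:+: (ts.take i).flatten

section Example15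
/-- The letter `a`. -/
def la : Fin 2 := 0
/-- The letter `b`. -/
def lb : Fin 2 := 1

/-- The string `aab·aab³·aab⁷ ⋯ aab^(2^(k-2)-1)·aab^(2^(k-2))` (for `k = 2` it is just
`aab^(2^(k-2)) = aab`). -/
def exStr (k : ℕ) : List (Fin 2) :=
  ((List.range (k - 2)).flatMap fun t => [la, la] ++ List.replicate (2 ^ (t + 1) - 1) lb)
    ++ ([la, la] ++ List.replicate (2 ^ (k - 2)) lb)

/-- The parsing `a.a.b.aab.b².aab³.b⁴.⋯.aab^(2^(k-2)-1).b` (for `k = 2` it is `a.a.b`). -/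
def exLZParse (k : ℕ) : List (List (Fin 2)) :=
  [[la], [la], [lb]] ++ (List.range (k - 2)).flatMap fun t =>
    [[la, la] ++ List.replicate (2 ^ (t + 1) - 1) lb,
     if t = k - 3 then [lb] else List.replicate (2 ^ (t + 1)) lb]

/-- The parsing `a.ab.aabb.baab⁴.b³aab⁸.⋯.b^(2^(k-3)-1)aab^(2^(k-2))` (for `k = 2` it is
`a.ab`). -/
def exLZ3Parse (k : ℕ) : List (List (Fin 2)) :=
  [[la], [la, lb]] ++ (List.range (k - 2)).map fun t =>
    List.replicate (2 ^ t - 1) lb ++ [la, la] ++ List.replicate (2 ^ (t + 1)) lb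

/-! ### Auxiliary machinery -/

lemma take_eq_mono {α : Type*} {x y : List α} {m ℓ : ℕ} (h : x.take m = y.take m) (hl : ℓ ≤ m) :
    x.take ℓ = y.take ℓ := by
  rw [← Nat.min_eq_left hl, ← List.take_take, h, List.take_take]

lemma permOv_mono {α : Type*} {s : List α} {i m ℓ : ℕ} (h : PermOv s i m) (hl : ℓ ≤ m) :
    PermOv s i ℓ := by
  obtain ⟨j, hj, he⟩ := h
  exact ⟨j, hj, take_eq_mono he hl⟩

lemma permOv3_mono {α : Type*} {s : List α} {i m ℓ : ℕ} (h : PermOv3 s i m) (hl : ℓ ≤ m) :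
    PermOv3 s i ℓ := by
  obtain ⟨j, hj, he⟩ := h
  exact ⟨j, hj, take_eq_mono he (by omega)⟩

lemma phraseLen_eq {α : Type*} {P : List α → ℕ → ℕ → Prop} {s : List α} {i ℓ : ℕ}
    (h1 : 1 ≤ ℓ) (h2 : ℓ ≤ s.length - i) (hP : P s i ℓ)
    (hmax : ∀ m, ℓ < m → m ≤ s.length - i → ¬ P s i m) : phraseLen P s i = ℓ := by
  unfold phraseLen
  rw [Nat.findGreatest_eq_iff.mpr ⟨h2, fun _ => hP, fun n hn hb => hmax n hn hb⟩]
  omega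

lemma phraseLen_eq_one {α : Type*} {P : List α → ℕ → ℕ → Prop} {s : List α} {i : ℕ}
    (hnone : ∀ m, 1 ≤ m → m ≤ s.length - i → ¬ P s i m) : phraseLen P s i = 1 := by
  unfold phraseLen
  rw [Nat.findGreatest_eq_iff.mpr
    ⟨Nat.zero_le _, fun h => absurd rfl h, fun n hn hb => hnone n hn hb⟩]
  simp

lemma phrasesFrom_pos {α : Type*} (P : List α → ℕ → ℕ → Prop) (s : List α) (i : ℕ)
    (h : i < s.length) : phrasesFrom P s i =
      (s.drop i).take (phraseLen P s i) :: phrasesFrom P s (i + phraseLen P s i) := by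
  rw [phrasesFrom, dif_pos h]

lemma phrasesFrom_nil {α : Type*} (P : List α → ℕ → ℕ → Prop) (s : List α) (i : ℕ)
    (h : s.length ≤ i) : phrasesFrom P s i = [] := by
  rw [phrasesFrom, dif_neg (by omega)]

lemma substr_ext {α : Type*} {s : List α} {j i ℓ : ℕ} (hj : j + ℓ ≤ s.length)
    (hi : i + ℓ ≤ s.length)
    (h : ∀ d (hd : d < ℓ) (h1 : j + d < s.length) (h2 : i + d < s.length), s[j + d] = s[i + d]) :
    (s.drop j).take ℓ = (s.drop i).take ℓ := by
  apply List.ext_getElem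
  · simp; omega
  · intro d h1 h2
    simp only [List.length_take, List.length_drop] at h1
    rw [List.getElem_take, List.getElem_drop, List.getElem_take, List.getElem_drop]
    exact h d (by omega) (by omega) (by omega)

lemma substr_get {α : Type*} {s : List α} {j i ℓ : ℕ}
    (h : (s.drop j).take ℓ = (s.drop i).take ℓ)
    {d : ℕ} (hd : d < ℓ) (h1 : j + d < s.length) (h2 : i + d < s.length) :
    s[j + d] = s[i + d] := by
  have := congrArg (fun l => l[d]?) h
  simp only [List.getElem?_take, List.getElem?_drop, hd, if_pos hd] at this
  rw [List.getElem?_eq_getElem h1, List.getElem?_eq_getElem h2] at this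
  exact Option.some_injective _ this

/-! ### The block structure of `exStr` -/

/-- Start position of block `m` : `A m = 2^(m+1) - 2 + m`. -/
def As (m : ℕ) : ℕ := 2 ^ (m + 1) - 2 + m

/-- The character at position `p` of (any sufficiently long) `exStr k`. -/
noncomputable def chr (p : ℕ) : Fin 2 :=
  if ∃ m, p = As m ∨ p = As m + 1 then la else lb

def blk (t : ℕ) : List (Fin 2) := [la, la] ++ List.replicate (2 ^ (t + 1) - 1) lb

lemma blk_length (t : ℕ) : (blk t).length = 2 ^ (t + 1) + 1 := by
  have := Nat.one_le_two_pow (n := t + 1)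
  simp [blk]; omega

lemma As_succ (m : ℕ) : As (m + 1) = As m + 2 ^ (m + 1) + 1 := by
  unfold As
  have : 2 ≤ 2 ^ (m + 1) := Nat.one_lt_two_pow (by omega)
  have : 2 ^ (m + 2) = 2 * 2 ^ (m + 1) := by ring
  omega

lemma flat_length (n : ℕ) : ((List.range n).flatMap blk).length = As n := by
  induction n with
  | zero => rfl
  | succ n ih =>
    rw [List.range_succ, List.flatMap_append, List.length_append, ih]
    simp [blk_length, As_succ]; omega

lemma chr_As (m : ℕ) : chr (As m) = la := if_pos ⟨m, Or.inl rfl⟩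
lemma chr_As1 (m : ℕ) : chr (As m + 1) = la := if_pos ⟨m, Or.inr rfl⟩

lemma As_mono : StrictMono As := by
  apply strictMono_nat_of_lt_succ
  intro n; rw [As_succ]; have := Nat.one_le_two_pow (n := n + 1); omega

lemma chr_b {m p : ℕ} (h1 : As m + 2 ≤ p) (h2 : p < As (m + 1)) : chr p = lb := by
  unfold chr
  rw [if_neg]
  rintro ⟨m', hm'⟩
  rcases Nat.lt_or_ge m' (m + 1) with h | h
  · have := As_mono.le_iff_le.mpr (Nat.lt_succ_iff.mp h)
    omega
  · have := As_mono.le_iff_le.mpr h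
    omega

lemma la_ne_lb : la ≠ lb := by decide

lemma chr_a_iff {p : ℕ} : chr p = la ↔ ∃ m, p = As m ∨ p = As m + 1 := by
  unfold chr
  split
  · rename_i h
    exact iff_of_true rfl h
  · rename_i h
    constructor
    · intro hc; exact absurd hc (by decide)
    · intro hc; exact absurd hc h

lemma chr_aa {p : ℕ} (h1 : chr p = la) (h2 : chr (p + 1) = la) : ∃ m, p = As m := by
  obtain ⟨m, hm | hm⟩ := chr_a_iff.mp h1
  · exact ⟨m, hm⟩
  · exfalso
    have hb : chr (p + 1) = lb := by
      apply chr_b (m := m) (by omega)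
      rw [As_succ]; have := Nat.one_le_two_pow (n := m + 1); omega
    exact la_ne_lb (h2 ▸ hb ▸ rfl)

/-- The character at offset `d ≤ 2^(r+1)` from the start of block `r`. -/
lemma chr_at {r d : ℕ} (hd : d ≤ 2 ^ (r + 1)) : chr (As r + d) = if d < 2 then la else lb := by
  match d with
  | 0 => simpa using chr_As r
  | 1 => simpa using chr_As1 r
  | (e + 2) =>
    rw [if_neg (by omega)]
    exact chr_b (m := r) (by omega) (by rw [As_succ]; omega)

lemma chr_at_a {r d : ℕ} (hd : d < 2) : chr (As r + d) = la := by
  rw [chr_at (by have := Nat.one_le_two_pow (n := r + 1); omega), if_pos hd]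

lemma chr_at_b {r d : ℕ} (h2 : 2 ≤ d) (hd : d ≤ 2 ^ (r + 1)) : chr (As r + d) = lb := by
  rw [chr_at hd, if_neg (by omega)]

lemma blk_get (t d : ℕ) (hd : d < 2 ^ (t + 1) + 1) (h2 : d < (blk t).length) :
    (blk t)[d] = chr (As t + d) := by
  match d with
  | 0 => simp [blk, chr_As]
  | 1 => simp [blk, chr_As1]
  | (e + 2) =>
    have h1 : (blk t)[e+2] = lb := by
      simp [blk]
    rw [h1, chr_b (m := t) (by omega)]
    rw [As_succ]; omega

lemma flat_get (n : ℕ) : ∀ p (hp : p < As n) (h2 : p < ((List.range n).flatMap blk).length),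
    ((List.range n).flatMap blk)[p] = chr p := by
  induction n with
  | zero => intro p h; simp [As] at h
  | succ n ih =>
    intro p h h2
    have he : (List.range (n+1)).flatMap blk = (List.range n).flatMap blk ++ blk n := by
      rw [List.range_succ, List.flatMap_append]; simp
    rw [List.getElem_of_eq he]
    rcases Nat.lt_or_ge p (As n) with hp | hp
    · rw [List.getElem_append_left (by rw [flat_length]; exact hp)]
      exact ih p hp _
    · rw [List.getElem_append_right (by rw [flat_length]; exact hp)]
      simp only [flat_length]
      have hb : p - As n < 2 ^ (n + 1) + 1 := by rw [As_succ] at h; omega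
      have := blk_get n (p - As n) hb (by rw [blk_length]; exact hb)
      rw [this]
      congr 1; omega

/-- The length of `exStr k`. -/
def slen (k : ℕ) : ℕ := As (k - 2) + 2 ^ (k - 2) + 2

lemma exStr_eq (k : ℕ) : exStr k =
    (List.range (k-2)).flatMap blk ++ ([la, la] ++ List.replicate (2 ^ (k - 2)) lb) := rfl

lemma exStr_length (k : ℕ) : (exStr k).length = slen k := by
  rw [exStr_eq, List.length_append, flat_length]
  simp [slen]
  omega

lemma lastblk_get (k d : ℕ) (hd : d < 2 ^ (k - 2) + 2)
    (h2 : d < ([la, la] ++ List.replicate (2 ^ (k - 2)) lb).length) :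
    ([la, la] ++ List.replicate (2 ^ (k - 2)) lb)[d] = chr (As (k - 2) + d) := by
  match d with
  | 0 => simp [chr_As]
  | 1 => simpa using (chr_As1 (k - 2)).symm
  | (e + 2) =>
    simp only [List.cons_append, List.nil_append, List.getElem_cons_succ]
    rw [List.getElem_replicate]
    rw [chr_b (m := k - 2) (by omega)]
    rw [As_succ]
    have h3 : 2 ^ (k - 2) < 2 ^ (k - 2 + 1) := by
      have : 2 ^ (k - 2 + 1) = 2 * 2 ^ (k - 2) := by ring
      have := Nat.one_le_two_pow (n := k - 2)
      omega
    omega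

lemma exStr_get {k p : ℕ} (h : p < (exStr k).length) : (exStr k)[p] = chr p := by
  rw [exStr_length, slen] at h
  rw [List.getElem_of_eq (exStr_eq k)]
  rcases Nat.lt_or_ge p (As (k-2)) with hp | hp
  · rw [List.getElem_append_left (by rw [flat_length]; exact hp)]
    exact flat_get _ p hp _
  · rw [List.getElem_append_right (by rw [flat_length]; exact hp)]
    simp only [flat_length]
    rw [lastblk_get k (p - As (k-2)) (by omega)]
    congr 1; omega

lemma pow_le_pow_two {a b : ℕ} (h : a ≤ b) : 2 ^ a ≤ 2 ^ b := Nat.pow_le_pow_right (by omega) h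

lemma As_le_As {a b : ℕ} (h : a ≤ b) : As a ≤ As b := As_mono.le_iff_le.mpr h

/-- `As m + 2 ^ m` is monotone. -/
lemma As_pow_mono {a b : ℕ} (h : a ≤ b) : As a + 2 ^ a ≤ As b + 2 ^ b := by
  unfold As
  have h1 : 2 ^ (a + 1) ≤ 2 ^ (b + 1) := pow_le_pow_two (by omega)
  have h2 : 2 ^ a ≤ 2 ^ b := pow_le_pow_two h
  have h3 : 2 ^ (a+1) = 2 * 2 ^ a := by ring
  have h4 : 2 ^ (b+1) = 2 * 2 ^ b := by ring
  omega

/-- Position bound for blocks: block `r` together with its `2^(r+1) - 1` b's fits in the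
string as long as `r + 1 ≤ k - 2`; also the last block fits. -/
lemma As_window_le {k t : ℕ} (hk : 3 ≤ k) (ht : t ≤ k - 3) :
    As (t + 1) + 2 ^ (t + 1) + 2 ≤ slen k := by
  have := As_pow_mono (a := t + 1) (b := k - 2) (by omega)
  unfold slen
  omega
/-! ### The LZ phrase lengths -/

lemma lz_len0 {k : ℕ} : phraseLen PermOv (exStr k) 0 = 1 := by
  apply phraseLen_eq_one
  rintro m h1 h2 ⟨j, hj, -⟩
  omega

lemma slen_ge {k : ℕ} : 3 ≤ slen k := by
  have := Nat.one_le_two_pow (n := k - 2)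
  unfold slen
  omega

lemma chr0 : chr 0 = la := by have := chr_As 0; norm_num [As] at this; exact this
lemma chr1 : chr 1 = la := by have := chr_As1 0; norm_num [As] at this; exact this
lemma chr2 : chr 2 = lb := by
  have := chr_at_b (r := 0) (d := 2) le_rfl (by norm_num)
  norm_num [As] at this; exact this

lemma lz_len1 {k : ℕ} : phraseLen PermOv (exStr k) 1 = 1 := by
  have hlen := exStr_length k
  have h3 := slen_ge (k := k)
  apply phraseLen_eq le_rfl (by omega)
  · refine ⟨0, one_pos, ?_⟩
    apply substr_ext (by omega) (by omega)
    intro d hd h1 h2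
    rw [exStr_get h1, exStr_get h2]
    have hd0 : d = 0 := by omega
    subst hd0
    norm_num [chr0, chr1]
  · intro m hm hmb hP
    obtain ⟨j, hj, he⟩ := permOv_mono hP (show 2 ≤ m by omega)
    have hj0 : j = 0 := by omega
    subst hj0
    have := substr_get he (show 1 < 2 by omega) (by omega) (by omega)
    rw [exStr_get (by omega), exStr_get (by omega)] at this
    norm_num [chr1, chr2] at this
    exact la_ne_lb this

lemma lz_len2 {k : ℕ} : phraseLen PermOv (exStr k) 2 = 1 := by
  have hlen := exStr_length k
  have h3 := slen_ge (k := k)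
  apply phraseLen_eq_one
  intro m h1 h2 hP
  obtain ⟨j, hj, he⟩ := permOv_mono hP h1
  have := substr_get he (show 0 < 1 by omega) (by omega) (by omega)
  rw [exStr_get (by omega), exStr_get (by omega)] at this
  norm_num [chr2] at this
  interval_cases j
  · rw [chr0] at this; exact la_ne_lb this
  · rw [chr1] at this; exact la_ne_lb this

lemma lz_phrase1 {k t : ℕ} (hk : 3 ≤ k) (ht : t ≤ k - 3) :
    phraseLen PermOv (exStr k) (As (t + 1)) = 2 ^ (t + 1) + 1 := by
  have hlen := exStr_length k
  have hw := As_window_le hk ht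
  have hA1 : As (t + 1) = As t + 2 ^ (t + 1) + 1 := As_succ t
  have hA2 : As (t + 2) = As (t + 1) + 2 ^ (t + 2) + 1 := As_succ (t + 1)
  have hp1 : 2 ^ (t + 1) = 2 * 2 ^ t := by ring
  have hp2 : 2 ^ (t + 2) = 2 * 2 ^ (t + 1) := by ring
  have h1t : 1 ≤ 2 ^ t := Nat.one_le_two_pow
  apply phraseLen_eq (by omega) (by omega)
  · refine ⟨As t, by omega, ?_⟩
    apply substr_ext (by omega) (by omega)
    intro d hd h1 h2
    rw [exStr_get h1, exStr_get h2]
    rcases Nat.lt_or_ge d 2 with hc | hc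
    · rw [chr_at_a (r := t) hc, chr_at_a (r := t + 1) hc]
    · rw [chr_at_b (r := t) hc (by omega), chr_at_b (r := t + 1) hc (by omega)]
  · intro m hm hmb hP
    obtain ⟨j, hj, he⟩ := permOv_mono hP (show 2 ^ (t + 1) + 2 ≤ m by omega)
    have hg : ∀ d, d < 2 ^ (t + 1) + 2 → chr (j + d) = chr (As (t + 1) + d) := by
      intro d hd
      have h2 : As (t + 1) + d < (exStr k).length := by omega
      have h1 : j + d < (exStr k).length := by omega
      have := substr_get he hd h1 h2
      rwa [exStr_get h1, exStr_get h2] at this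
    have e0 := hg 0 (by omega)
    have e1 := hg 1 (by omega)
    simp only [Nat.add_zero] at e0
    rw [chr_As] at e0
    rw [chr_As1] at e1
    obtain ⟨m', hm'⟩ := chr_aa e0 e1
    have hAm' : j = As m' := hm'
    have hm't : m' < t + 1 := As_mono.lt_iff_lt.mp (by omega)
    have hAm : As (m' + 1) = As m' + 2 ^ (m' + 1) + 1 := As_succ m'
    have hpm : 2 ^ (m' + 1) ≤ 2 ^ (t + 1) := pow_le_pow_two (by omega)
    have h1m : 1 ≤ 2 ^ (m' + 1) := Nat.one_le_two_pow
    have ed := hg (2 ^ (m' + 1) + 1) (by omega)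
    rw [show j + (2 ^ (m' + 1) + 1) = As (m' + 1) by omega, chr_As] at ed
    rw [chr_at_b (r := t + 1) (d := 2 ^ (m' + 1) + 1) (by omega) (by omega)] at ed
    exact la_ne_lb ed

lemma lz_phrase2_mid {k t : ℕ} (hk : 3 ≤ k) (ht : t + 4 ≤ k) :
    phraseLen PermOv (exStr k) (As (t + 1) + 2 ^ (t + 1) + 1) = 2 ^ (t + 1) := by
  have hlen := exStr_length k
  have hA2 : As (t + 2) = As (t + 1) + 2 ^ (t + 2) + 1 := As_succ (t + 1)
  have hp2 : 2 ^ (t + 2) = 2 * 2 ^ (t + 1) := by ring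
  have h1t : 1 ≤ 2 ^ (t + 1) := Nat.one_le_two_pow
  have hw : As (t + 2) + 2 ^ (t + 2) + 2 ≤ slen k := As_window_le hk (by omega)
  apply phraseLen_eq (by omega) (by omega)
  · refine ⟨As (t + 1) + 2 ^ (t + 1), by omega, ?_⟩
    apply substr_ext (by omega) (by omega)
    intro d hd h1 h2
    rw [exStr_get h1, exStr_get h2]
    rw [show As (t + 1) + 2 ^ (t + 1) + d = As (t + 1) + (2 ^ (t + 1) + d) by omega,
        show As (t + 1) + 2 ^ (t + 1) + 1 + d = As (t + 1) + (2 ^ (t + 1) + 1 + d) by omega]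
    rw [chr_at_b (r := t + 1) (by omega) (by omega),
        chr_at_b (r := t + 1) (by omega) (by omega)]
  · intro m hm hmb hP
    obtain ⟨j, hj, he⟩ := permOv_mono hP (show 2 ^ (t + 1) + 1 ≤ m by omega)
    have hg : ∀ d, d < 2 ^ (t + 1) + 1 →
        chr (j + d) = chr (As (t + 1) + 2 ^ (t + 1) + 1 + d) := by
      intro d hd
      have h2 : As (t + 1) + 2 ^ (t + 1) + 1 + d < (exStr k).length := by omega
      have h1 : j + d < (exStr k).length := by omega
      have := substr_get he hd h1 h2
      rwa [exStr_get h1, exStr_get h2] at this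
    have etop := hg (2 ^ (t + 1)) (by omega)
    rw [show As (t + 1) + 2 ^ (t + 1) + 1 + 2 ^ (t + 1) = As (t + 2) by omega, chr_As] at etop
    obtain ⟨m', hm' | hm'⟩ := chr_a_iff.mp etop
    · have hm0 : m' ≠ 0 := by
        intro h
        subst h
        have : As 0 = 0 := by norm_num [As]
        omega
      obtain ⟨u, rfl⟩ : ∃ u, m' = u + 1 := ⟨m' - 1, by omega⟩
      have hAu : As (u + 1) = As u + 2 ^ (u + 1) + 1 := As_succ u
      rcases le_or_gt (u + 1) (t + 1) with hle | hgt
      · have hpow : 2 ^ (u + 1) ≤ 2 ^ (t + 1) := pow_le_pow_two (by omega)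
        have h1u : 1 ≤ 2 ^ (u + 1) := Nat.one_le_two_pow
        have ed := hg (2 ^ (t + 1) - 2 ^ (u + 1)) (by omega)
        rw [show j + (2 ^ (t + 1) - 2 ^ (u + 1)) = As u + 1 by omega, chr_As1] at ed
        rw [show As (t + 1) + 2 ^ (t + 1) + 1 + (2 ^ (t + 1) - 2 ^ (u + 1)) =
          As (t + 1) + (2 ^ (t + 1) + 1 + (2 ^ (t + 1) - 2 ^ (u + 1))) by omega] at ed
        rw [chr_at_b (r := t + 1) (by omega) (by omega)] at ed
        exact la_ne_lb ed
      · have := As_le_As (show t + 2 ≤ u + 1 by omega)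
        omega
    · have ed := hg (2 ^ (t + 1) - 1) (by omega)
      rw [show j + (2 ^ (t + 1) - 1) = As m' by omega, chr_As] at ed
      rw [show As (t + 1) + 2 ^ (t + 1) + 1 + (2 ^ (t + 1) - 1) =
        As (t + 1) + (2 ^ (t + 1) + 1 + (2 ^ (t + 1) - 1)) by omega] at ed
      rw [chr_at_b (r := t + 1) (by omega) (by omega)] at ed
      exact la_ne_lb ed

lemma lz_last {k : ℕ} (hk : 3 ≤ k) : phraseLen PermOv (exStr k) (slen k - 1) = 1 := by
  have hlen := exStr_length k
  have h2 : 2 ≤ 2 ^ (k - 2) := by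
    have : (2:ℕ) ^ 1 ≤ 2 ^ (k - 2) := pow_le_pow_two (by omega)
    simpa using this
  have hp : 2 ^ (k - 2 + 1) = 2 * 2 ^ (k - 2) := by ring
  have hsl : slen k = As (k - 2) + 2 ^ (k - 2) + 2 := rfl
  apply phraseLen_eq le_rfl (by omega)
  · refine ⟨slen k - 2, by omega, ?_⟩
    apply substr_ext (by omega) (by omega)
    intro d hd h1 h2'
    have hd0 : d = 0 := by omega
    subst hd0
    rw [exStr_get h1, exStr_get h2']
    rw [show slen k - 2 + 0 = As (k - 2) + 2 ^ (k - 2) by omega,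
        show slen k - 1 + 0 = As (k - 2) + (2 ^ (k - 2) + 1) by omega]
    rw [chr_at_b (r := k - 2) (by omega) (by omega),
        chr_at_b (r := k - 2) (by omega) (by omega)]
  · intro m hm hmb hP
    rw [hlen] at hmb
    omega
/-! ### The LZ3 phrase lengths -/

lemma lz3_len0 {k : ℕ} : phraseLen PermOv3 (exStr k) 0 = 1 := by
  apply phraseLen_eq_one
  rintro m h1 h2 ⟨j, hj, -⟩
  omega

lemma lz3_len1 {k : ℕ} : phraseLen PermOv3 (exStr k) 1 = 2 := by
  have hlen := exStr_length k
  have h3 := slen_ge (k := k)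
  apply phraseLen_eq (by omega) (by omega)
  · refine ⟨0, one_pos, ?_⟩
    show ((exStr k).drop 0).take (2 - 1) = ((exStr k).drop 1).take (2 - 1)
    apply substr_ext (by omega) (by omega)
    intro d hd h1 h2
    have hd0 : d = 0 := by omega
    subst hd0
    rw [exStr_get h1, exStr_get h2]
    norm_num [chr0, chr1]
  · intro m hm hmb hP
    obtain ⟨j, hj, he⟩ := permOv3_mono hP (show 3 ≤ m by omega)
    have hj0 : j = 0 := by omega
    subst hj0
    have := substr_get he (show 1 < 3 - 1 by omega) (by omega) (by omega)
    rw [exStr_get (by omega), exStr_get (by omega)] at this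
    norm_num [chr1, chr2] at this
    exact la_ne_lb this

lemma lz3_phrase {k t : ℕ} (hk : 3 ≤ k) (ht : t ≤ k - 3) :
    phraseLen PermOv3 (exStr k) (As t + 2 ^ t + 2) = 3 * 2 ^ t + 1 := by
  have hlen := exStr_length k
  have hw := As_window_le hk ht
  have hA1 : As (t + 1) = As t + 2 ^ (t + 1) + 1 := As_succ t
  have hA2 : As (t + 2) = As (t + 1) + 2 ^ (t + 2) + 1 := As_succ (t + 1)
  have hp1 : 2 ^ (t + 1) = 2 * 2 ^ t := by ring
  have hp2 : 2 ^ (t + 2) = 2 * 2 ^ (t + 1) := by ring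
  have h1t : 1 ≤ 2 ^ t := Nat.one_le_two_pow
  -- i + 3*2^t + 1 = As (t+1) + 2^(t+1) + 2 ≤ slen k
  apply phraseLen_eq (by omega) (by omega)
  · refine ⟨As t - (2 ^ t - 1), by omega, ?_⟩
    show ((exStr k).drop (As t - (2 ^ t - 1))).take (3 * 2 ^ t + 1 - 1)
      = ((exStr k).drop (As t + 2 ^ t + 2)).take (3 * 2 ^ t + 1 - 1)
    have hAt : 2 ^ t - 1 ≤ As t := by unfold As; omega
    apply substr_ext (by omega) (by omega)
    intro d hd h1 h2
    rw [exStr_get h1, exStr_get h2]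
    rcases Nat.lt_or_ge d (2 ^ t - 1) with hc | hc
    · have ht1 : 1 ≤ t := by
        rcases Nat.eq_zero_or_pos t with h | h
        · subst h; norm_num at hc
        · omega
      obtain ⟨u, rfl⟩ : ∃ u, t = u + 1 := ⟨t - 1, by omega⟩
      have hAu : As (u + 1) = As u + 2 ^ (u + 1) + 1 := As_succ u
      have hpu : 2 ^ (u + 1) = 2 * 2 ^ u := by ring
      have h1u : 1 ≤ 2 ^ u := Nat.one_le_two_pow
      rw [show As (u + 1) - (2 ^ (u + 1) - 1) + d = As u + (2 + d) by omega,
          show As (u + 1) + 2 ^ (u + 1) + 2 + d = As (u + 1) + (2 ^ (u + 1) + 2 + d) by omega]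
      rw [chr_at_b (r := u) (by omega) (by omega),
          chr_at_b (r := u + 1) (by omega) (by omega)]
    · rcases Nat.lt_or_ge d (2 ^ t + 1) with hc2 | hc2
      · rw [show As t - (2 ^ t - 1) + d = As t + (d - (2 ^ t - 1)) by omega,
            show As t + 2 ^ t + 2 + d = As (t + 1) + (d - (2 ^ t - 1)) by omega]
        rw [chr_at_a (r := t) (by omega), chr_at_a (r := t + 1) (by omega)]
      · rw [show As t - (2 ^ t - 1) + d = As t + (d - (2 ^ t - 1)) by omega,
            show As t + 2 ^ t + 2 + d = As (t + 1) + (d - (2 ^ t - 1)) by omega]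
        rw [chr_at_b (r := t) (by omega) (by omega),
            chr_at_b (r := t + 1) (by omega) (by omega)]
  · intro m hm hmb hP
    obtain ⟨j, hj, he⟩ := permOv3_mono hP (show 3 * 2 ^ t + 2 ≤ m by omega)
    have hg : ∀ d, d < 3 * 2 ^ t + 2 - 1 → chr (j + d) = chr (As t + 2 ^ t + 2 + d) := by
      intro d hd
      have h2 : As t + 2 ^ t + 2 + d < (exStr k).length := by omega
      have h1 : j + d < (exStr k).length := by omega
      have := substr_get he hd h1 h2
      rwa [exStr_get h1, exStr_get h2] at this
    have e0 := hg (2 ^ t - 1) (by omega)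
    have e1 := hg (2 ^ t) (by omega)
    rw [show As t + 2 ^ t + 2 + (2 ^ t - 1) = As (t + 1) by omega, chr_As] at e0
    rw [show As t + 2 ^ t + 2 + 2 ^ t = As (t + 1) + 1 by omega, chr_As1] at e1
    rw [show j + 2 ^ t = j + (2 ^ t - 1) + 1 by omega] at e1
    obtain ⟨m', hm'⟩ := chr_aa e0 e1
    have hm't : m' < t + 1 := As_mono.lt_iff_lt.mp (by omega)
    have hAm : As (m' + 1) = As m' + 2 ^ (m' + 1) + 1 := As_succ m'
    have hpm : 2 ^ (m' + 1) ≤ 2 ^ (t + 1) := pow_le_pow_two (by omega)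
    have h1m : 1 ≤ 2 ^ (m' + 1) := Nat.one_le_two_pow
    have ed := hg (2 ^ t + 2 ^ (m' + 1)) (by omega)
    rw [show j + (2 ^ t + 2 ^ (m' + 1)) = As (m' + 1) by omega, chr_As] at ed
    rw [show As t + 2 ^ t + 2 + (2 ^ t + 2 ^ (m' + 1)) =
      As (t + 1) + (2 ^ (m' + 1) + 1) by omega] at ed
    rw [chr_at_b (r := t + 1) (by omega) (by omega)] at ed
    exact la_ne_lb ed
/-! ### Phrase contents -/

lemma content_ext {k i ℓ : ℕ} {w : List (Fin 2)} (hle : i + ℓ ≤ slen k) (hw : w.length = ℓ)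
    (h : ∀ d (hd : d < ℓ), chr (i + d) = w[d]'(by omega)) :
    ((exStr k).drop i).take ℓ = w := by
  have hlen := exStr_length k
  apply List.ext_getElem (by simp [hlen]; omega)
  intro d h1 h2
  rw [List.getElem_take, List.getElem_drop, exStr_get (by omega)]
  exact h d (by omega)

lemma pat1_get {R d : ℕ} (h2 : d < ([la, la] ++ List.replicate R lb).length) :
    ([la, la] ++ List.replicate R lb)[d] = if d < 2 then la else lb := by
  match d with
  | 0 => simp
  | 1 => simp
  | (e + 2) =>
    rw [if_neg (by omega)]
    simp only [List.cons_append, List.nil_append, List.getElem_cons_succ]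
    apply List.getElem_replicate

lemma pat3_get {t d : ℕ}
    (h2 : d < (List.replicate (2 ^ t - 1) lb ++ [la, la] ++ List.replicate (2 ^ (t + 1)) lb).length) :
    (List.replicate (2 ^ t - 1) lb ++ [la, la] ++ List.replicate (2 ^ (t + 1)) lb)[d]
      = if 2 ^ t - 1 ≤ d ∧ d < 2 ^ t + 1 then la else lb := by
  have h1t : 1 ≤ 2 ^ t := Nat.one_le_two_pow
  have hll : (List.replicate (2 ^ t - 1) lb ++ [la, la]).length = 2 ^ t + 1 := by simp; omega
  rcases Nat.lt_or_ge d (2 ^ t + 1) with hc | hc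
  · rw [List.getElem_append_left (by omega)]
    rcases Nat.lt_or_ge d (2 ^ t - 1) with hc2 | hc2
    · rw [if_neg (by omega)]
      rw [List.getElem_append_left (by simp; omega)]
      apply List.getElem_replicate
    · rw [if_pos ⟨hc2, hc⟩]
      rw [List.getElem_append_right (by simp; omega)]
      have : d - (List.replicate (2 ^ t - 1) lb).length = 0
          ∨ d - (List.replicate (2 ^ t - 1) lb).length = 1 := by simp; omega
      rcases this with h | h <;>
        simp only [List.length_replicate] at h ⊢ <;> simp [h]
  · rw [if_neg (by omega), List.getElem_append_right (by omega)]
    apply List.getElem_replicate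

lemma chr_win3 {t d : ℕ} (hd : d ≤ 3 * 2 ^ t) :
    chr (As t + 2 ^ t + 2 + d) = if 2 ^ t - 1 ≤ d ∧ d < 2 ^ t + 1 then la else lb := by
  have hA1 : As (t + 1) = As t + 2 ^ (t + 1) + 1 := As_succ t
  have hp1 : 2 ^ (t + 1) = 2 * 2 ^ t := by ring
  have hp2 : 2 ^ (t + 2) = 2 * 2 ^ (t + 1) := by ring
  have h1t : 1 ≤ 2 ^ t := Nat.one_le_two_pow
  rcases Nat.lt_or_ge d (2 ^ t - 1) with hc | hc
  · rw [if_neg (by omega)]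
    rw [show As t + 2 ^ t + 2 + d = As t + (2 ^ t + 2 + d) by omega]
    exact chr_at_b (by omega) (by omega)
  · rcases Nat.lt_or_ge d (2 ^ t + 1) with hc2 | hc2
    · rw [if_pos ⟨hc, hc2⟩, show As t + 2 ^ t + 2 + d = As (t + 1) + (d - (2 ^ t - 1)) by omega]
      exact chr_at_a (by omega)
    · rw [if_neg (by omega),
        show As t + 2 ^ t + 2 + d = As (t + 1) + (d - (2 ^ t - 1)) by omega]
      exact chr_at_b (by omega) (by omega)

lemma content0 {k : ℕ} : ((exStr k).drop 0).take 1 = [la] := by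
  have h3 := slen_ge (k := k)
  apply content_ext (by omega) (by simp)
  intro d hd
  have : d = 0 := by omega
  subst this
  simpa using chr0

lemma content1 {k : ℕ} : ((exStr k).drop 1).take 1 = [la] := by
  have h3 := slen_ge (k := k)
  apply content_ext (by omega) (by simp)
  intro d hd
  have : d = 0 := by omega
  subst this
  simpa using chr1

lemma content2 {k : ℕ} : ((exStr k).drop 2).take 1 = [lb] := by
  have h3 := slen_ge (k := k)
  apply content_ext (by omega) (by simp)
  intro d hd
  have : d = 0 := by omega
  subst this
  simpa using chr2

lemma content_ab {k : ℕ} : ((exStr k).drop 1).take 2 = [la, lb] := by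
  have h3 := slen_ge (k := k)
  apply content_ext (by omega) (by simp)
  intro d hd
  match d with
  | 0 => simpa using chr1
  | 1 => simpa using chr2

lemma contentP1 {k t : ℕ} (hk : 3 ≤ k) (ht : t ≤ k - 3) :
    ((exStr k).drop (As (t + 1))).take (2 ^ (t + 1) + 1)
      = [la, la] ++ List.replicate (2 ^ (t + 1) - 1) lb := by
  have hw := As_window_le hk ht
  have h1t : 1 ≤ 2 ^ (t + 1) := Nat.one_le_two_pow
  apply content_ext (by omega) (by simp; omega)
  intro d hd
  rw [pat1_get]
  exact chr_at (by omega)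

lemma contentP2 {k t : ℕ} (hk : 3 ≤ k) (ht : t + 4 ≤ k) :
    ((exStr k).drop (As (t + 1) + 2 ^ (t + 1) + 1)).take (2 ^ (t + 1))
      = List.replicate (2 ^ (t + 1)) lb := by
  have hA2 : As (t + 2) = As (t + 1) + 2 ^ (t + 2) + 1 := As_succ (t + 1)
  have hp2 : 2 ^ (t + 2) = 2 * 2 ^ (t + 1) := by ring
  have h1t : 1 ≤ 2 ^ (t + 1) := Nat.one_le_two_pow
  have hw : As (t + 2) + 2 ^ (t + 2) + 2 ≤ slen k := As_window_le hk (by omega)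
  apply content_ext (by omega) (by simp)
  intro d hd
  rw [List.getElem_replicate,
    show As (t + 1) + 2 ^ (t + 1) + 1 + d = As (t + 1) + (2 ^ (t + 1) + 1 + d) by omega]
  exact chr_at_b (by omega) (by omega)

lemma content_last {k : ℕ} (hk : 3 ≤ k) : ((exStr k).drop (slen k - 1)).take 1 = [lb] := by
  have h2 : 2 ≤ 2 ^ (k - 2) := by
    have : (2:ℕ) ^ 1 ≤ 2 ^ (k - 2) := pow_le_pow_two (by omega)
    simpa using this
  have hp : 2 ^ (k - 2 + 1) = 2 * 2 ^ (k - 2) := by ring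
  have hsl : slen k = As (k - 2) + 2 ^ (k - 2) + 2 := rfl
  apply content_ext (by omega) (by simp)
  intro d hd
  have : d = 0 := by omega
  subst this
  rw [show slen k - 1 + 0 = As (k - 2) + (2 ^ (k - 2) + 1) by omega]
  simpa using chr_at_b (r := k - 2) (by omega) (by omega)

lemma contentP3 {k t : ℕ} (hk : 3 ≤ k) (ht : t ≤ k - 3) :
    ((exStr k).drop (As t + 2 ^ t + 2)).take (3 * 2 ^ t + 1)
      = List.replicate (2 ^ t - 1) lb ++ [la, la] ++ List.replicate (2 ^ (t + 1)) lb := by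
  have hw := As_window_le hk ht
  have hA1 : As (t + 1) = As t + 2 ^ (t + 1) + 1 := As_succ t
  have hp1 : 2 ^ (t + 1) = 2 * 2 ^ t := by ring
  have h1t : 1 ≤ 2 ^ t := Nat.one_le_two_pow
  apply content_ext (by omega) (by simp; omega)
  intro d hd
  rw [pat3_get, chr_win3 (by omega)]
/-! ### Assembling the parsings -/

lemma lz_tail {k : ℕ} (hk : 3 ≤ k) :
    ∀ n t, 1 ≤ n → t + n = k - 2 →
      phrasesFrom PermOv (exStr k) (As (t + 1)) =
        (List.range' t n).flatMap (fun u =>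
          [[la, la] ++ List.replicate (2 ^ (u + 1) - 1) lb,
           if u = k - 3 then [lb] else List.replicate (2 ^ (u + 1)) lb]) := by
  intro n
  induction n with
  | zero => intro t h1 h2; omega
  | succ n ih =>
    intro t h1 h2
    have hlen := exStr_length k
    have hsg := slen_ge (k := k)
    have ht3 : t ≤ k - 3 := by omega
    have hw := As_window_le hk ht3
    have h1t : 1 ≤ 2 ^ (t + 1) := Nat.one_le_two_pow
    rw [phrasesFrom_pos _ _ _ (by omega)]
    rw [lz_phrase1 hk ht3, contentP1 hk ht3]
    rw [List.range'_succ, List.flatMap_cons]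
    rcases Nat.eq_zero_or_pos n with hn | hn
    · subst hn
      have htk : t = k - 3 := by omega
      have hpos : As (t + 1) + (2 ^ (t + 1) + 1) = slen k - 1 := by
        have e1 : As (t + 1) = As (k - 2) := by rw [htk]; congr 1; omega
        have e2 : (2:ℕ) ^ (t + 1) = 2 ^ (k - 2) := by rw [htk]; congr 1; omega
        rw [e1, e2]
        unfold slen
        omega
      rw [hpos, phrasesFrom_pos _ _ _ (by omega), lz_last hk, content_last hk]
      rw [show slen k - 1 + 1 = slen k by omega, phrasesFrom_nil _ _ _ (by omega)]
      rw [if_pos htk]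
      rfl
    · have htlt : t + 4 ≤ k := by omega
      have hA2 : As (t + 2) = As (t + 1) + 2 ^ (t + 2) + 1 := As_succ (t + 1)
      have hp2 : 2 ^ (t + 2) = 2 * 2 ^ (t + 1) := by ring
      have hw2 := As_window_le hk (show t + 1 ≤ k - 3 by omega)
      rw [show As (t + 1) + (2 ^ (t + 1) + 1) = As (t + 1) + 2 ^ (t + 1) + 1 by omega]
      rw [phrasesFrom_pos _ _ _ (by omega)]
      rw [lz_phrase2_mid hk htlt, contentP2 hk htlt]
      rw [show As (t + 1) + 2 ^ (t + 1) + 1 + 2 ^ (t + 1) = As (t + 1 + 1) by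
        rw [As_succ (t + 1)]; omega]
      rw [ih (t + 1) hn (by omega)]
      rw [if_neg (by omega)]
      rfl

lemma lz3_tail {k : ℕ} (hk : 3 ≤ k) :
    ∀ n t, 1 ≤ n → t + n = k - 2 →
      phrasesFrom PermOv3 (exStr k) (As t + 2 ^ t + 2) =
        (List.range' t n).map (fun u =>
          List.replicate (2 ^ u - 1) lb ++ [la, la] ++ List.replicate (2 ^ (u + 1)) lb) := by
  intro n
  induction n with
  | zero => intro t h1 h2; omega
  | succ n ih =>
    intro t h1 h2
    have hlen := exStr_length k
    have hsg := slen_ge (k := k)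
    have ht3 : t ≤ k - 3 := by omega
    have hw := As_window_le hk ht3
    have hA1 : As (t + 1) = As t + 2 ^ (t + 1) + 1 := As_succ t
    have hp1 : 2 ^ (t + 1) = 2 * 2 ^ t := by ring
    have h1t : 1 ≤ 2 ^ t := Nat.one_le_two_pow
    rw [phrasesFrom_pos _ _ _ (by omega)]
    rw [lz3_phrase hk ht3, contentP3 hk ht3]
    rw [List.range'_succ, List.map_cons]
    rcases Nat.eq_zero_or_pos n with hn | hn
    · subst hn
      have htk : t = k - 3 := by omega
      have hpos : As t + 2 ^ t + 2 + (3 * 2 ^ t + 1) = slen k := by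
        have e0 : As t + 2 ^ t + 2 + (3 * 2 ^ t + 1) = As (t + 1) + 2 ^ (t + 1) + 2 := by omega
        have e1 : As (t + 1) = As (k - 2) := by rw [htk]; congr 1; omega
        have e2 : (2:ℕ) ^ (t + 1) = 2 ^ (k - 2) := by rw [htk]; congr 1; omega
        rw [e0, e1, e2]
        unfold slen
        omega
      rw [hpos, phrasesFrom_nil _ _ _ (by omega)]
      rfl
    · rw [show As t + 2 ^ t + 2 + (3 * 2 ^ t + 1) = As (t + 1) + 2 ^ (t + 1) + 2 by omega]
      rw [ih (t + 1) hn (by omega)]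

lemma lz_full {k : ℕ} (hk : 2 ≤ k) : lzPhrases (exStr k) = exLZParse k := by
  have hlen := exStr_length k
  have hsg := slen_ge (k := k)
  unfold lzPhrases
  rw [phrasesFrom_pos _ _ _ (by omega), lz_len0, content0,
      show 0 + 1 = 1 by omega]
  rw [phrasesFrom_pos _ _ _ (by omega), lz_len1, content1,
      show 1 + 1 = 2 by omega]
  rw [phrasesFrom_pos _ _ _ (by omega), lz_len2, content2,
      show 2 + 1 = 3 by omega]
  rcases Nat.lt_or_ge k 3 with h3 | h3
  · have hk2 : k = 2 := by omega
    subst hk2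
    have : slen 2 = 3 := by norm_num [slen, As]
    rw [phrasesFrom_nil _ _ _ (by omega)]
    rfl
  · rw [show (3:ℕ) = As (0 + 1) by norm_num [As]]
    rw [lz_tail h3 (k - 2) 0 (by omega) (by omega)]
    unfold exLZParse
    rw [List.range_eq_range']
    rfl

lemma lz3_full {k : ℕ} (hk : 2 ≤ k) : lz3Phrases (exStr k) = exLZ3Parse k := by
  have hlen := exStr_length k
  have hsg := slen_ge (k := k)
  unfold lz3Phrases
  rw [phrasesFrom_pos _ _ _ (by omega), lz3_len0, content0,
      show 0 + 1 = 1 by omega]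
  rw [phrasesFrom_pos _ _ _ (by omega), lz3_len1, content_ab,
      show 1 + 2 = 3 by omega]
  rcases Nat.lt_or_ge k 3 with h3 | h3
  · have hk2 : k = 2 := by omega
    subst hk2
    have : slen 2 = 3 := by norm_num [slen, As]
    rw [phrasesFrom_nil _ _ _ (by omega)]
    rfl
  · rw [show (3:ℕ) = As 0 + 2 ^ 0 + 2 by norm_num [As]]
    rw [lz3_tail h3 (k - 2) 0 (by omega) (by omega)]
    unfold exLZ3Parse
    rw [List.range_eq_range']
    rfl

lemma exLZParse_length {k : ℕ} (hk : 2 ≤ k) : (exLZParse k).length = 2 * k - 1 := by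
  unfold exLZParse
  rw [List.length_append, List.length_flatMap]
  have : List.map (List.length ∘ (fun t =>
      [[la, la] ++ List.replicate (2 ^ (t + 1) - 1) lb,
       if t = k - 3 then [lb] else List.replicate (2 ^ (t + 1)) lb])) (List.range (k - 2))
      = List.replicate (k - 2) 2 := by
    rw [List.eq_replicate_iff]
    refine ⟨by simp, ?_⟩
    intro b hb
    simp only [List.mem_map] at hb
    obtain ⟨u, hu, rfl⟩ := hb
    rfl
  simp only [Function.comp_def] at this
  rw [this, List.sum_replicate]
  simp
  omega

lemma exLZ3Parse_length {k : ℕ} (hk : 2 ≤ k) : (exLZ3Parse k).length = k := by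
  unfold exLZ3Parse
  simp only [List.length_append, List.length_map, List.length_range, List.length_cons,
    List.length_nil]
  omega

lemma main2 {k : ℕ} (hk : 2 ≤ k) :
    lzPhrases (exStr k) = exLZParse k ∧ (exLZParse k).length = 2 * k - 1 ∧
      lz3Phrases (exStr k) = exLZ3Parse k ∧ (exLZ3Parse k).length = k :=
  ⟨lz_full hk, exLZParse_length hk, lz3_full hk, exLZ3Parse_length hk⟩

lemma single_parse (P : List (Fin 2) → ℕ → ℕ → Prop)
    (hno : ∀ m, ¬ P [la] 0 m) : phrasesFrom P [la] 0 = [[la]] := by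
  have h1 : phraseLen P [la] 0 = 1 := by
    apply phraseLen_eq_one
    intro m hm1 hm2
    exact hno m
  rw [phrasesFrom_pos _ _ _ (by simp), h1, phrasesFrom_nil _ _ _ (by simp)]
  rfl

/-- For every `k ≥ 1` there is a binary string with `Zov₃ = k` and `Zov = 2k - 1`.
In particular, for `k ≥ 2` the string `aab·aab³·aab⁷ ⋯ aab^(2^(k-2)-1)·aab^(2^(k-2))` has
LZ parsing `a.a.b.aab.b².aab³.b⁴.⋯.aab^(2^(k-2)-1).b` of size `2k - 1` and LZ3 parsing
`a.ab.aabb.baab⁴.b³aab⁸.⋯.b^(2^(k-3)-1)aab^(2^(k-2))` of size `k`. -/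
theorem exists_zOv3_half_zOv :
    (∀ k : ℕ, 1 ≤ k → ∃ s : List (Fin 2), zOv3 s = k ∧ zOv s = 2 * k - 1) ∧
    (∀ k : ℕ, 2 ≤ k →
      lzPhrases (exStr k) = exLZParse k ∧ (exLZParse k).length = 2 * k - 1 ∧
      lz3Phrases (exStr k) = exLZ3Parse k ∧ (exLZ3Parse k).length = k) := by
  refine ⟨?_, fun k hk => main2 hk⟩
  intro k hk
  rcases Nat.lt_or_ge k 2 with h | h
  · have hk1 : k = 1 := by omega
    subst hk1
    refine ⟨[la], ?_, ?_⟩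
    · unfold zOv3 lz3Phrases
      rw [single_parse _ (by rintro m ⟨j, hj, -⟩; omega)]
      rfl
    · unfold zOv lzPhrases
      rw [single_parse _ (by rintro m ⟨j, hj, -⟩; omega)]
      rfl
  · obtain ⟨h1, h2, h3, h4⟩ := main2 h
    exact ⟨exStr k, by unfold zOv3; rw [h3, h4], by unfold zOv; rw [h1, h2]⟩

end Example15
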